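/- In a flat folding of a closed polygonal loop in the line (a cyclic sequence of segments alternately going left and right, mapped to ℝ, forming a non-self-intersecting flat-folded loop when separated infinitesimally in a second dimension), the number of convex creases exceeds the number of reflex creases by exactly 2. -/
import Mathlib
set_option linter.unusedSectionVars false
set_option linter.unusedVariables false
set_option maxHeartbeats 1000000

open Finset

/-- Two integer intervals (given by their endpoints) properly interleave
(cross) each other. -/
def Interleaved (a b c d : ℤ) : Prop :=
  (min a b < min c d ∧ min c d < max a b ∧ max a b < max c d) ∨
  (min c d < min a b ∧ min a b < max c d ∧ max c d < max a b)

namespace FF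

/-- Sign of an integer. -/
def sg (x : ℤ) : ℤ := if 0 < x then 1 else if x < 0 then -1 else 0

lemma sg_neg (x : ℤ) : sg (-x) = - sg x := by
  simp only [sg]; split_ifs <;> omega

/-- degenerate pairs never interleave -/
lemma notItl_degen_left (a c d : ℤ) : ¬ Interleaved a a c d := by
  simp only [Interleaved]; omega

lemma notItl_degen_right (a b c : ℤ) : ¬ Interleaved a b c c := by
  simp only [Interleaved]; omega

lemma itl_comm {a b c d : ℤ} : Interleaved a b c d ↔ Interleaved c d a b := by
  simp only [Interleaved]; omega

/-- If both `c` and `d` avoid the open interval spanned by `a, b`,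
the pairs do not interleave. -/
lemma notItl_of_outside {a b c d : ℤ}
    (hc : ¬(min a b < c ∧ c < max a b)) (hd : ¬(min a b < d ∧ d < max a b)) :
    ¬ Interleaved a b c d := by
  simp only [Interleaved]; omega

/-- A non-interleaved pair of no smaller width lies entirely outside. -/
lemma outside_of_notItl {a b c d : ℤ} (h : ¬ Interleaved a b c d)
    (h1 : c ≠ a) (h2 : c ≠ b) (h3 : d ≠ a) (h4 : d ≠ b)
    (hw : |b - a| ≤ |d - c|) :
    ¬(min a b < c ∧ c < max a b) ∧ ¬(min a b < d ∧ d < max a b) := by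
  simp only [Interleaved] at h
  rcases abs_cases (d-c) with ⟨e1,e2⟩|⟨e1,e2⟩ <;> rcases abs_cases (b-a) with ⟨f1,f2⟩|⟨f1,f2⟩ <;>
    omega

/-- The merge identity for the turning-sum of runs. -/
lemma merge_sg {α u v ω : ℤ} (h : ¬ Interleaved α u v ω)
    (hα : ¬(min u v < α ∧ α < max u v)) (hω : ¬(min u v < ω ∧ ω < max u v))
    (d1 : α ≠ u) (d2 : α ≠ v) (d3 : α ≠ ω) (d4 : u ≠ v) (d5 : u ≠ ω) (d6 : v ≠ ω) :
    - sg (u - α) + (sg (v - u) + - sg (ω - v)) = - sg (ω - α) := by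
  simp only [Interleaved] at h
  simp only [sg]
  split_ifs <;> omega

/-- Non-interleaving is preserved when merging two runs across an
adjacent (empty) gap. -/
lemma merge_notItl {α u v ω C D : ℤ} (h1 : ¬ Interleaved α u C D) (h2 : ¬ Interleaved v ω C D)
    (h3 : ¬ Interleaved α u v ω)
    (hC : ¬(min u v < C ∧ C < max u v)) (hD : ¬(min u v < D ∧ D < max u v))
    (hα : ¬(min u v < α ∧ α < max u v)) (hω : ¬(min u v < ω ∧ ω < max u v))
    (dαu : α ≠ u) (dαv : α ≠ v) (dαω : α ≠ ω) (dαC : α ≠ C) (dαD : α ≠ D)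
    (duv : u ≠ v) (duω : u ≠ ω) (duC : u ≠ C) (duD : u ≠ D)
    (dvω : v ≠ ω) (dvC : v ≠ C) (dvD : v ≠ D) (dωC : ω ≠ C) (dωD : ω ≠ D) (dCD : C ≠ D) :
    ¬ Interleaved α ω C D := by
  simp only [Interleaved] at *
  omega

section Main

variable {n : ℕ} [NeZero n] (p : ZMod n → ℝ) (lay : ZMod n → ℤ)

open Classical in
/-- the ±1 sign of crease `i` (convex = +1). -/
noncomputable def sE (i : ZMod n) : ℤ :=
  if 0 < (p i - p (i - 1)) * ((lay i : ℝ) - (lay (i - 1) : ℝ)) then 1 else -1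

open Classical in
/-- sorting key for the sweep order of creases. -/
noncomputable def ky (i : ZMod n) : Lex (ℝ × Lex (ℕ × ℤ)) :=
  toLex (p i, toLex ((if p (i+1) < p i then 0 else 1),
    (if p (i+1) < p i then |lay i - lay (i-1)| else -|lay i - lay (i-1)|)))

open Classical in
/-- first exit time: least `m ≥ 1` with `v + m ∉ Q`. -/
noncomputable def mQ (Q : Finset (ZMod n)) (v : ZMod n) : ℕ :=
  if h : ∃ m : ℕ, 0 < m ∧ v + ((m : ℕ) : ZMod n) ∉ Q then Nat.find h else 0

/-- downward-closedness of the processed set. -/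
def DC (Q : Finset (ZMod n)) : Prop := ∀ a ∈ Q, ∀ b ∉ Q, ky p lay a ≤ ky p lay b

/-- run invariant: turning sum of each run. -/
def R1 (Q : Finset (ZMod n)) : Prop :=
  ∀ v ∉ Q, ∑ k ∈ Finset.Ico 1 (mQ Q v), sE p lay (v + (k : ZMod n)) =
    - sg (lay (v + ((mQ Q v : ℕ) : ZMod n) - 1) - lay v)

end Main

/-- run invariant: runs pairwise non-interleaved. -/
def R2 {n : ℕ} [NeZero n] (p : ZMod n → ℝ) (lay : ZMod n → ℤ) (Q : Finset (ZMod n)) : Prop :=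
  ∀ v ∉ Q, ∀ u ∉ Q, v ≠ u →
    ¬ Interleaved (lay v) (lay (v + ((mQ Q v : ℕ) : ZMod n) - 1))
      (lay u) (lay (u + ((mQ Q u : ℕ) : ZMod n) - 1))


section Lemmas

variable {n : ℕ} [NeZero n] {p : ZMod n → ℝ} {lay : ZMod n → ℤ}

lemma n_two (alt : ∀ i : ZMod n, (p (i + 1) - p i) * (p (i + 2) - p (i + 1)) < 0) :
    2 ≤ n := by
  rcases n with _ | _ | m
  · exact absurd rfl (NeZero.ne 0)
  · exfalso
    have h := alt 0
    have e1 : ((0 : ZMod 1) + 1) = 0 := Subsingleton.elim _ _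
    have e2 : ((0 : ZMod 1) + 2) = 0 := Subsingleton.elim _ _
    rw [e1, e2] at h
    simp at h
  · omega

lemma zc (hn : 2 ≤ n) {k : ℕ} (h1 : 0 < k) (h2 : k < n) : ((k : ℕ) : ZMod n) ≠ 0 := by
  intro h
  rw [ZMod.natCast_eq_zero_iff] at h
  exact absurd (Nat.le_of_dvd h1 h) (by omega)

lemma one_ne_zero' (hn : 2 ≤ n) : (1 : ZMod n) ≠ 0 := by
  have := zc (n := n) hn (k := 1) one_pos (by omega)
  simpa using this

lemma hne (alt : ∀ i : ZMod n, (p (i + 1) - p i) * (p (i + 2) - p (i + 1)) < 0)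
    (i : ZMod n) : p (i + 1) ≠ p i := by
  intro h
  have := alt i
  rw [h] at this
  simp at this

lemma hne' (alt : ∀ i : ZMod n, (p (i + 1) - p i) * (p (i + 2) - p (i + 1)) < 0)
    (i : ZMod n) : p i ≠ p (i - 1) := by
  have := hne alt (i - 1)
  rwa [show i - 1 + 1 = i by ring] at this

lemma alt' (alt : ∀ i : ZMod n, (p (i + 1) - p i) * (p (i + 2) - p (i + 1)) < 0)
    (i : ZMod n) : (p i - p (i - 1)) * (p (i + 1) - p i) < 0 := by
  have := alt (i - 1)
  rwa [show i - 1 + 1 = i by ring, show i - 1 + 2 = i + 1 by ring] at this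

lemma hside (alt : ∀ i : ZMod n, (p (i + 1) - p i) * (p (i + 2) - p (i + 1)) < 0)
    (i : ZMod n) : p (i + 1) < p i ↔ p (i - 1) < p i := by
  have h := alt' alt i
  rcases mul_neg_iff.mp h with ⟨h1, h2⟩ | ⟨h1, h2⟩
  · constructor <;> intro <;> linarith
  · constructor <;> intro <;> linarith

lemma hlayne (hn : 2 ≤ n)
    (alt : ∀ i : ZMod n, (p (i + 1) - p i) * (p (i + 2) - p (i + 1)) < 0)
    (distinct : ∀ i j : ZMod n, i ≠ j →
      (Set.Ioo (min (p i) (p (i + 1))) (max (p i) (p (i + 1))) ∩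
        Set.Ioo (min (p j) (p (j + 1))) (max (p j) (p (j + 1)))).Nonempty →
      lay i ≠ lay j)
    (i : ZMod n) : lay i ≠ lay (i - 1) := by
  have hij : i ≠ i - 1 := by
    intro h
    have h2 : i + 1 = i - 1 + 1 := by rw [← h]
    rw [show i - 1 + 1 = i by ring] at h2
    have : (1 : ZMod n) = 0 := by
      have := congrArg (· - i) h2
      simpa [add_sub_cancel_left] using this
    exact one_ne_zero' hn this
  apply distinct i (i - 1) hij
  rw [show i - 1 + 1 = i by ring]
  have h := alt' alt i
  rcases mul_neg_iff.mp h with ⟨h1, h2⟩ | ⟨h1, h2⟩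
  · -- both segments to the left of p i
    have hM3 : max (p (i-1)) (p (i+1)) < p i := max_lt (by linarith) (by linarith)
    set x := (max (p (i-1)) (p (i+1)) + p i) / 2 with hx
    have hx1 : max (p (i-1)) (p (i+1)) < x := by rw [hx]; linarith
    have hx2 : x < p i := by rw [hx]; linarith
    refine ⟨x, ⟨?_, ?_⟩, ⟨?_, ?_⟩⟩
    · exact lt_of_le_of_lt (min_le_right _ _) (lt_of_le_of_lt (le_max_right _ _) hx1)
    · exact lt_of_lt_of_le hx2 (le_max_left _ _)
    · exact lt_of_le_of_lt (min_le_left _ _) (lt_of_le_of_lt (le_max_left _ _) hx1)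
    · exact lt_of_lt_of_le hx2 (le_max_right _ _)
  · -- both segments to the right of p i
    have hM3 : p i < min (p (i-1)) (p (i+1)) := lt_min (by linarith) (by linarith)
    set x := (p i + min (p (i-1)) (p (i+1))) / 2 with hx
    have hx1 : x < min (p (i-1)) (p (i+1)) := by rw [hx]; linarith
    have hx2 : p i < x := by rw [hx]; linarith
    refine ⟨x, ⟨?_, ?_⟩, ⟨?_, ?_⟩⟩
    · exact lt_of_le_of_lt (min_le_left _ _) hx2
    · exact lt_of_lt_of_le (lt_of_lt_of_le hx1 (min_le_right _ _)) (le_max_right _ _)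
    · exact lt_of_le_of_lt (min_le_right _ _) hx2
    · exact lt_of_lt_of_le (lt_of_lt_of_le hx1 (min_le_left _ _)) (le_max_left _ _)

lemma sE_left (alt : ∀ i : ZMod n, (p (i + 1) - p i) * (p (i + 2) - p (i + 1)) < 0)
    {i : ZMod n} (h : p (i - 1) < p i) (hl : lay i ≠ lay (i - 1)) :
    FF.sE p lay i = sg (lay i - lay (i - 1)) := by
  have hp : (0:ℝ) < p i - p (i - 1) := by linarith
  rcases lt_trichotomy (lay (i-1)) (lay i) with h' | h' | h'
  · have hc : (0:ℝ) < (lay i : ℝ) - (lay (i-1) : ℝ) := by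
      have : ((lay (i-1) : ℝ)) < (lay i : ℝ) := by exact_mod_cast h'
      linarith
    rw [FF.sE, if_pos (mul_pos hp hc), sg, if_pos (by omega)]
  · exact absurd h'.symm hl
  · have hc : (lay i : ℝ) - (lay (i-1) : ℝ) < 0 := by
      have : ((lay i : ℝ)) < (lay (i-1) : ℝ) := by exact_mod_cast h'
      linarith
    have : (p i - p (i - 1)) * ((lay i : ℝ) - (lay (i-1) : ℝ)) < 0 :=
      mul_neg_of_pos_of_neg hp hc
    rw [FF.sE, if_neg (by linarith), sg, if_neg (by omega), if_pos (by omega)]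

lemma sE_right (alt : ∀ i : ZMod n, (p (i + 1) - p i) * (p (i + 2) - p (i + 1)) < 0)
    {i : ZMod n} (h : p i < p (i - 1)) (hl : lay i ≠ lay (i - 1)) :
    FF.sE p lay i = - sg (lay i - lay (i - 1)) := by
  have hp : p i - p (i - 1) < 0 := by linarith
  rcases lt_trichotomy (lay (i-1)) (lay i) with h' | h' | h'
  · have hc : (0:ℝ) < (lay i : ℝ) - (lay (i-1) : ℝ) := by
      have : ((lay (i-1) : ℝ)) < (lay i : ℝ) := by exact_mod_cast h'
      linarith
    have : (p i - p (i - 1)) * ((lay i : ℝ) - (lay (i-1) : ℝ)) < 0 :=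
      mul_neg_of_neg_of_pos hp hc
    rw [FF.sE, if_neg (by linarith), sg, if_pos (by omega)]
  · exact absurd h'.symm hl
  · have hc : (lay i : ℝ) - (lay (i-1) : ℝ) < 0 := by
      have : ((lay i : ℝ)) < (lay (i-1) : ℝ) := by exact_mod_cast h'
      linarith
    have : 0 < (p i - p (i - 1)) * ((lay i : ℝ) - (lay (i-1) : ℝ)) :=
      mul_pos_of_neg_of_neg hp hc
    rw [FF.sE, if_pos this, sg, if_neg (by omega), if_pos (by omega)]
    norm_num

section MQ

variable {Q : Finset (ZMod n)} {v : ZMod n}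

lemma mq_exists (hv : v ∉ Q) : ∃ m : ℕ, 0 < m ∧ v + ((m : ℕ) : ZMod n) ∉ Q :=
  ⟨n, Nat.pos_of_ne_zero (NeZero.ne n), by rwa [ZMod.natCast_self, add_zero]⟩

lemma mq_pos (hv : v ∉ Q) : 0 < mQ Q v := by
  rw [mQ, dif_pos (mq_exists hv)]
  exact (Nat.find_spec (mq_exists hv)).1

lemma mq_notin (hv : v ∉ Q) : v + ((mQ Q v : ℕ) : ZMod n) ∉ Q := by
  rw [mQ, dif_pos (mq_exists hv)]
  exact (Nat.find_spec (mq_exists hv)).2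

lemma mq_mem (hv : v ∉ Q) {k : ℕ} (h1 : 0 < k) (h2 : k < mQ Q v) :
    v + ((k : ℕ) : ZMod n) ∈ Q := by
  rw [mQ, dif_pos (mq_exists hv)] at h2
  have := Nat.find_min (mq_exists hv) h2
  by_contra hc
  exact this ⟨h1, hc⟩

lemma mq_le (hv : v ∉ Q) : mQ Q v ≤ n := by
  rw [mQ, dif_pos (mq_exists hv)]
  exact Nat.find_min' _ ⟨Nat.pos_of_ne_zero (NeZero.ne n),
    by rwa [ZMod.natCast_self, add_zero]⟩

lemma mq_unique (hv : v ∉ Q) {m : ℕ} (hm : 0 < m)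
    (hnotin : v + ((m : ℕ) : ZMod n) ∉ Q)
    (hmem : ∀ k : ℕ, 0 < k → k < m → v + ((k : ℕ) : ZMod n) ∈ Q) :
    mQ Q v = m := by
  rcases lt_trichotomy (mQ Q v) m with h | h | h
  · exact absurd (hmem _ (mq_pos hv) h) (mq_notin hv)
  · exact h
  · rw [mQ, dif_pos (mq_exists hv)] at h
    exact absurd ⟨hm, hnotin⟩ (Nat.find_min (mq_exists hv) h)

lemma mq_lt (hv : v ∉ Q) {u : ZMod n} (hu : u ∉ Q) (huv : u ≠ v) : mQ Q v < n := by
  have hn2 : 2 ≤ n := by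
    rcases Nat.lt_or_ge n 2 with h | h
    · interval_cases n
      · exact absurd rfl (NeZero.ne 0)
      · exact absurd (Subsingleton.elim u v) huv
    · exact h
  rcases Nat.lt_or_ge (mQ Q v) n with h | h
  · exact h
  · exfalso
    have hle := mq_le hv
    have heq : mQ Q v = n := le_antisymm hle h
    -- then every v + k, 0 < k < n is in Q, contradicting u ∉ Q
    have hval : u = v + (((u - v).val : ℕ) : ZMod n) := by
      rw [ZMod.natCast_rightInverse]
      ring
    have hpos : 0 < (u - v).val := ZMod.val_pos.mpr (sub_ne_zero.mpr huv)
    have hlt : (u - v).val < n := ZMod.val_lt _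
    have := mq_mem hv hpos (by omega)
    rw [← hval] at this
    exact hu this

end MQ

lemma ky_le_pos {i j : ZMod n} (h : FF.ky p lay i ≤ FF.ky p lay j) : p i ≤ p j := by
  rw [FF.ky, FF.ky, Prod.Lex.le_iff] at h
  rcases h with h | ⟨h, _⟩
  · exact le_of_lt h
  · exact le_of_eq h

lemma ky_snd {i j : ZMod n} (h : FF.ky p lay i ≤ FF.ky p lay j) (hp : p i = p j) :
    (if p (i+1) < p i then (0:ℕ) else 1) < (if p (j+1) < p j then (0:ℕ) else 1) ∨
    ((if p (i+1) < p i then (0:ℕ) else 1) = (if p (j+1) < p j then (0:ℕ) else 1) ∧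
      (if p (i+1) < p i then |lay i - lay (i-1)| else -|lay i - lay (i-1)|) ≤
      (if p (j+1) < p j then |lay j - lay (j-1)| else -|lay j - lay (j-1)|)) := by
  rw [FF.ky, FF.ky, Prod.Lex.le_iff] at h
  rcases h with h | ⟨_, h2⟩
  · exact absurd hp (ne_of_lt h)
  · rw [Prod.Lex.le_iff] at h2
    exact h2

/-- overlap of two "alive" segments seen strictly from the left of `x0`. -/
lemma ovl (distinct : ∀ i j : ZMod n, i ≠ j →
      (Set.Ioo (min (p i) (p (i + 1))) (max (p i) (p (i + 1))) ∩
        Set.Ioo (min (p j) (p (j + 1))) (max (p j) (p (j + 1)))).Nonempty →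
      lay i ≠ lay j)
    {x0 : ℝ} {k1 k2 a1 b1 a2 b2 : ZMod n} (hk : k1 ≠ k2)
    (e1 : (a1 = k1 ∧ b1 = k1 + 1) ∨ (a1 = k1 + 1 ∧ b1 = k1))
    (e2 : (a2 = k2 ∧ b2 = k2 + 1) ∨ (a2 = k2 + 1 ∧ b2 = k2))
    (h1a : p a1 < x0) (h1b : x0 ≤ p b1) (h2a : p a2 < x0) (h2b : x0 ≤ p b2) :
    lay k1 ≠ lay k2 := by
  apply distinct k1 k2 hk
  set x := (max (p a1) (p a2) + x0) / 2 with hx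
  have hm1 : p a1 ≤ max (p a1) (p a2) := le_max_left _ _
  have hm2 : p a2 ≤ max (p a1) (p a2) := le_max_right _ _
  have hM : max (p a1) (p a2) < x0 := max_lt h1a h2a
  have hx1 : max (p a1) (p a2) < x := by rw [hx]; linarith
  have hx2 : x < x0 := by rw [hx]; linarith
  refine ⟨x, ?_, ?_⟩
  · rcases e1 with ⟨ha, hb⟩ | ⟨ha, hb⟩
    · subst ha; subst hb
      exact ⟨lt_of_le_of_lt (min_le_left _ _) (by linarith),
        lt_of_lt_of_le (by linarith) (le_max_right _ _)⟩
    · subst ha; subst hb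
      exact ⟨lt_of_le_of_lt (min_le_right _ _) (by linarith),
        lt_of_lt_of_le (by linarith) (le_max_left _ _)⟩
  · rcases e2 with ⟨ha, hb⟩ | ⟨ha, hb⟩
    · subst ha; subst hb
      exact ⟨lt_of_le_of_lt (min_le_left _ _) (by linarith),
        lt_of_lt_of_le (by linarith) (le_max_right _ _)⟩
    · subst ha; subst hb
      exact ⟨lt_of_le_of_lt (min_le_right _ _) (by linarith),
        lt_of_lt_of_le (by linarith) (le_max_left _ _)⟩

/-- overlap of two segments both starting at `x0` and going right. -/
lemma ovr (distinct : ∀ i j : ZMod n, i ≠ j →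
      (Set.Ioo (min (p i) (p (i + 1))) (max (p i) (p (i + 1))) ∩
        Set.Ioo (min (p j) (p (j + 1))) (max (p j) (p (j + 1)))).Nonempty →
      lay i ≠ lay j)
    {x0 : ℝ} {k1 k2 a1 b1 a2 b2 : ZMod n} (hk : k1 ≠ k2)
    (e1 : (a1 = k1 ∧ b1 = k1 + 1) ∨ (a1 = k1 + 1 ∧ b1 = k1))
    (e2 : (a2 = k2 ∧ b2 = k2 + 1) ∨ (a2 = k2 + 1 ∧ b2 = k2))
    (h1a : p a1 = x0) (h1b : x0 < p b1) (h2a : p a2 = x0) (h2b : x0 < p b2) :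
    lay k1 ≠ lay k2 := by
  apply distinct k1 k2 hk
  set x := (x0 + min (p b1) (p b2)) / 2 with hx
  have hm1 : min (p b1) (p b2) ≤ p b1 := min_le_left _ _
  have hm2 : min (p b1) (p b2) ≤ p b2 := min_le_right _ _
  have hM : x0 < min (p b1) (p b2) := lt_min h1b h2b
  have hx1 : x < min (p b1) (p b2) := by rw [hx]; linarith
  have hx2 : x0 < x := by rw [hx]; linarith
  refine ⟨x, ?_, ?_⟩
  · rcases e1 with ⟨ha, hb⟩ | ⟨ha, hb⟩
    · subst ha; subst hb
      exact ⟨lt_of_le_of_lt (min_le_left _ _) (by linarith),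
        lt_of_lt_of_le (by linarith) (le_max_right _ _)⟩
    · subst ha; subst hb
      exact ⟨lt_of_le_of_lt (min_le_right _ _) (by linarith),
        lt_of_lt_of_le (by linarith) (le_max_left _ _)⟩
  · rcases e2 with ⟨ha, hb⟩ | ⟨ha, hb⟩
    · subst ha; subst hb
      exact ⟨lt_of_le_of_lt (min_le_left _ _) (by linarith),
        lt_of_lt_of_le (by linarith) (le_max_right _ _)⟩
    · subst ha; subst hb
      exact ⟨lt_of_le_of_lt (min_le_right _ _) (by linarith),
        lt_of_lt_of_le (by linarith) (le_max_left _ _)⟩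

/-- At an event `w`, any other alive segment `k` avoids the open layer
interval of the crease at `w`. -/
lemma eni (hn : 2 ≤ n)
    (alt : ∀ i : ZMod n, (p (i + 1) - p i) * (p (i + 2) - p (i + 1)) < 0)
    (distinct : ∀ i j : ZMod n, i ≠ j →
      (Set.Ioo (min (p i) (p (i + 1))) (max (p i) (p (i + 1))) ∩
        Set.Ioo (min (p j) (p (j + 1))) (max (p j) (p (j + 1)))).Nonempty →
      lay i ≠ lay j)
    (noPenetrate : ∀ i j : ZMod n,
      p i ∈ Set.Ioo (min (p j) (p (j + 1))) (max (p j) (p (j + 1))) →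
      ¬ (min (lay (i - 1)) (lay i) < lay j ∧
         lay j < max (lay (i - 1)) (lay i)))
    (noCross : ∀ i j : ZMod n, i ≠ j → p i = p j →
      0 < (p (i + 1) - p i) * (p (j + 1) - p j) →
      ¬ Interleaved (lay (i - 1)) (lay i) (lay (j - 1)) (lay j))
    {Q : Finset (ZMod n)} {w : ZMod n}
    (hDC : FF.DC p lay Q) (hw : w ∉ Q)
    (hmin : ∀ b, b ∉ Q → b ≠ w → FF.ky p lay w ≤ FF.ky p lay b)
    {k a b : ZMod n}
    (hab : (a = k ∧ b = k + 1) ∨ (a = k + 1 ∧ b = k))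
    (haQ : a ∈ Q) (hbQ : b ∉ Q) (hbw : b ≠ w) (hk1 : k ≠ w - 1) (hk2 : k ≠ w) :
    ¬ (min (lay (w-1)) (lay w) < lay k ∧ lay k < max (lay (w-1)) (lay w)) := by
  have hpa : p a ≤ p w := ky_le_pos (hDC a haQ w hw)
  have hpb : p w ≤ p b := ky_le_pos (hmin b hbQ hbw)
  have hpab : p a ≠ p b := by
    rcases hab with ⟨ha, hb⟩ | ⟨ha, hb⟩
    · rw [ha, hb]; exact (hne alt k).symm
    · rw [ha, hb]; exact hne alt k
  rcases eq_or_lt_of_le hpb with hb0 | hb0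
  · -- p w = p b : the other segment dies at the same point
    have hpa' : p a < p b := lt_of_le_of_ne (hb0 ▸ hpa) hpab
    have hb1 : p (b+1) < p b := by
      rcases hab with ⟨ha, hbk⟩ | ⟨ha, hbk⟩
      · have hk' : (k : ZMod n) = b - 1 := by rw [hbk]; ring
        have h1 : p (b - 1) < p b := by rw [← hk', ← ha]; exact hpa'
        exact (hside alt b).mpr h1
      · have h1 : b + 1 = a := by rw [ha, hbk]
        rw [h1]; exact hpa'
    have hky := ky_snd (p := p) (lay := lay) (hmin b hbQ hbw) hb0
    simp only [if_pos hb1] at hky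
    have hw1 : p (w+1) < p w := by
      by_contra hcon
      simp only [if_neg hcon] at hky
      rcases hky with h | ⟨h, _⟩ <;> omega
    simp only [if_pos hw1] at hky
    have hWle : |lay w - lay (w-1)| ≤ |lay b - lay (b-1)| := by
      rcases hky with h | ⟨_, h⟩
      · omega
      · exact h
    have hw2 : p (w-1) < p w := (hside alt w).mp hw1
    have hb2 : p (b-1) < p b := (hside alt b).mp hb1
    have hwb : w ≠ b := fun h => hbw h.symm
    have hni := noCross w b hwb hb0 (mul_pos_of_neg_of_neg (by linarith) (by linarith))
    have hbw1 : b ≠ w + 1 := by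
      intro h; rw [h] at hb0; exact hne alt w hb0.symm
    have hbw2 : b ≠ w - 1 := by
      intro h; rw [h] at hb0; exact absurd hb0 (ne_of_gt hw2)
    have hb2' : p (b-1) < p w := by rw [hb0]; exact hb2
    have hbp1' : p (b+1) < p w := by rw [hb0]; exact hb1
    have hd1 : lay (b-1) ≠ lay (w-1) :=
      ovl distinct (x0 := p w) (k1 := b-1) (k2 := w-1)
        (a1 := b-1) (b1 := b) (a2 := w-1) (b2 := w)
        (fun h => hwb (by rw [sub_left_inj] at h; exact h.symm))
        (Or.inl ⟨rfl, by ring⟩) (Or.inl ⟨rfl, by ring⟩)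
        hb2' (le_of_eq hb0) hw2 le_rfl
    have hd2 : lay (b-1) ≠ lay w :=
      ovl distinct (x0 := p w) (k1 := b-1) (k2 := w)
        (a1 := b-1) (b1 := b) (a2 := w+1) (b2 := w)
        (fun h => hbw1 (by rw [sub_eq_iff_eq_add] at h; exact h))
        (Or.inl ⟨rfl, by ring⟩) (Or.inr ⟨rfl, rfl⟩)
        hb2' (le_of_eq hb0) hw1 le_rfl
    have hd3 : lay b ≠ lay (w-1) :=
      ovl distinct (x0 := p w) (k1 := b) (k2 := w-1)
        (a1 := b+1) (b1 := b) (a2 := w-1) (b2 := w)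
        hbw2
        (Or.inr ⟨rfl, rfl⟩) (Or.inl ⟨rfl, by ring⟩)
        hbp1' (le_of_eq hb0) hw2 le_rfl
    have hd4 : lay b ≠ lay w :=
      ovl distinct (x0 := p w) (k1 := b) (k2 := w)
        (a1 := b+1) (b1 := b) (a2 := w+1) (b2 := w)
        hbw
        (Or.inr ⟨rfl, rfl⟩) (Or.inr ⟨rfl, rfl⟩)
        hbp1' (le_of_eq hb0) hw1 le_rfl
    have hout := outside_of_notItl hni hd1 hd2 hd3 hd4 hWle
    rcases hab with ⟨ha, hbk⟩ | ⟨ha, hbk⟩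
    · have hk' : (k : ZMod n) = b - 1 := by rw [hbk]; ring
      rw [hk']; exact hout.1
    · rw [← hbk]; exact hout.2
  · rcases eq_or_lt_of_le hpa with ha0 | ha0
    · -- p a = p w : the other segment is born at the same point
      have hpa' : p a < p b := by rw [ha0]; exact hb0
      have ha1 : p a < p (a+1) := by
        rcases hab with ⟨hak, hbk⟩ | ⟨hak, hbk⟩
        · have h1 : b = a + 1 := by rw [hbk, hak]
          rw [← h1]; exact hpa'
        · have hb' : b = a - 1 := by rw [hbk, hak]; ring
          have h2 : ¬ p (a - 1) < p a := by rw [← hb']; exact not_lt.mpr (le_of_lt hpa')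
          rcases lt_trichotomy (p (a+1)) (p a) with h | h | h
          · exact absurd ((hside alt a).mp h) h2
          · exact absurd h (hne alt a)
          · exact h
      have hkaw := ky_snd (p := p) (lay := lay) (hDC a haQ w hw) ha0
      simp only [if_neg (not_lt.mpr (le_of_lt ha1))] at hkaw
      have hwr : ¬ p (w+1) < p w := by
        intro hcon
        simp only [if_pos hcon] at hkaw
        rcases hkaw with h | ⟨h, _⟩ <;> omega
      simp only [if_neg hwr] at hkaw
      have hWle : |lay w - lay (w-1)| ≤ |lay a - lay (a-1)| := by
        rcases hkaw with h | ⟨_, h⟩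
        · omega
        · omega
      have hw1 : p w < p (w+1) := lt_of_le_of_ne (not_lt.mp hwr) (Ne.symm (hne alt w))
      have hw2 : p w < p (w-1) := by
        rcases lt_trichotomy (p (w-1)) (p w) with h | h | h
        · exact absurd ((hside alt w).mpr h) hwr
        · exact absurd h (hne' alt w).symm
        · exact h
      have ha2 : p a < p (a-1) := by
        rcases lt_trichotomy (p (a-1)) (p a) with h | h | h
        · exact absurd ((hside alt a).mpr h) (not_lt.mpr (le_of_lt ha1))
        · exact absurd h (hne' alt a).symm
        · exact h
      have haw : w ≠ a := fun h => hw (h ▸ haQ)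
      have hni := noCross w a haw ha0.symm (mul_pos (by linarith) (by linarith))
      have haw1 : a ≠ w + 1 := by
        intro h; rw [h] at ha0; exact hne alt w ha0
      have haw2 : a ≠ w - 1 := by
        intro h; rw [h] at ha0; exact (hne' alt w) ha0.symm
      have ha2' : p w < p (a-1) := by rw [← ha0]; exact ha2
      have hap1' : p w < p (a+1) := by rw [← ha0]; exact ha1
      have hd1 : lay (a-1) ≠ lay (w-1) :=
        ovr distinct (x0 := p w) (k1 := a-1) (k2 := w-1)
          (a1 := a) (b1 := a-1) (a2 := w) (b2 := w-1)
          (fun h => haw (by rw [sub_left_inj] at h; exact h.symm))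
          (Or.inr ⟨by ring, rfl⟩) (Or.inr ⟨by ring, rfl⟩)
          ha0 ha2' rfl hw2
      have hd2 : lay (a-1) ≠ lay w :=
        ovr distinct (x0 := p w) (k1 := a-1) (k2 := w)
          (a1 := a) (b1 := a-1) (a2 := w) (b2 := w+1)
          (fun h => haw1 (by rw [sub_eq_iff_eq_add] at h; exact h))
          (Or.inr ⟨by ring, rfl⟩) (Or.inl ⟨rfl, rfl⟩)
          ha0 ha2' rfl hw1
      have hd3 : lay a ≠ lay (w-1) :=
        ovr distinct (x0 := p w) (k1 := a) (k2 := w-1)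
          (a1 := a) (b1 := a+1) (a2 := w) (b2 := w-1)
          haw2
          (Or.inl ⟨rfl, rfl⟩) (Or.inr ⟨by ring, rfl⟩)
          ha0 hap1' rfl hw2
      have hd4 : lay a ≠ lay w :=
        ovr distinct (x0 := p w) (k1 := a) (k2 := w)
          (a1 := a) (b1 := a+1) (a2 := w) (b2 := w+1)
          (fun h => haw h.symm)
          (Or.inl ⟨rfl, rfl⟩) (Or.inl ⟨rfl, rfl⟩)
          ha0 hap1' rfl hw1
      have hout := outside_of_notItl hni hd1 hd2 hd3 hd4 hWle
      rcases hab with ⟨hak, hbk⟩ | ⟨hak, hbk⟩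
      · rw [← hak]; exact hout.2
      · have hk' : (k : ZMod n) = a - 1 := by rw [hak]; ring
        rw [hk']; exact hout.1
    · -- p a < p w < p b : the crease point lies strictly inside segment k
      apply noPenetrate w k
      rcases hab with ⟨hak, hbk⟩ | ⟨hak, hbk⟩
      · exact ⟨lt_of_le_of_lt (min_le_left _ _) (by rw [← hak]; exact ha0),
          lt_of_lt_of_le (by rw [hbk] at hb0; exact hb0) (le_max_right _ _)⟩
      · exact ⟨lt_of_le_of_lt (min_le_right _ _) (by rw [← hak]; exact ha0),
          lt_of_lt_of_le (by rw [hbk] at hb0; exact hb0) (le_max_left _ _)⟩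

lemma step (hn : 2 ≤ n)
    (alt : ∀ i : ZMod n, (p (i + 1) - p i) * (p (i + 2) - p (i + 1)) < 0)
    (distinct : ∀ i j : ZMod n, i ≠ j →
      (Set.Ioo (min (p i) (p (i + 1))) (max (p i) (p (i + 1))) ∩
        Set.Ioo (min (p j) (p (j + 1))) (max (p j) (p (j + 1)))).Nonempty →
      lay i ≠ lay j)
    (noPenetrate : ∀ i j : ZMod n,
      p i ∈ Set.Ioo (min (p j) (p (j + 1))) (max (p j) (p (j + 1))) →
      ¬ (min (lay (i - 1)) (lay i) < lay j ∧
         lay j < max (lay (i - 1)) (lay i)))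
    (noCross : ∀ i j : ZMod n, i ≠ j → p i = p j →
      0 < (p (i + 1) - p i) * (p (j + 1) - p j) →
      ¬ Interleaved (lay (i - 1)) (lay i) (lay (j - 1)) (lay j))
    {Q : Finset (ZMod n)} (hDC : FF.DC p lay Q)
    (hI1 : FF.R1 p lay Q) (hI2 : FF.R2 p lay Q)
    (hcard : 2 ≤ (univ \ Q).card) :
    ∃ w ∉ Q, FF.DC p lay (insert w Q) ∧ FF.R1 p lay (insert w Q) ∧
      FF.R2 p lay (insert w Q) := by
  obtain ⟨w, hwmem, hminall⟩ := Finset.exists_min_image (univ \ Q) (FF.ky p lay)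
    (Finset.card_pos.mp (by omega))
  have hw : w ∉ Q := (Finset.mem_sdiff.mp hwmem).2
  have hmin : ∀ b, b ∉ Q → b ≠ w → FF.ky p lay w ≤ FF.ky p lay b := fun b hb _ =>
    hminall b (Finset.mem_sdiff.mpr ⟨Finset.mem_univ _, hb⟩)
  have hDC' : FF.DC p lay (insert w Q) := by
    intro x hx y hy
    have hyQ : y ∉ Q := fun h => hy (Finset.mem_insert_of_mem h)
    have hyw : y ≠ w := fun h => hy (h ▸ Finset.mem_insert_self w Q)
    rcases Finset.mem_insert.mp hx with rfl | hx
    · exact hmin y hyQ hyw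
    · exact hDC x hx y hyQ
  have vlt : ∀ u : ZMod n, p u < p w → u ∈ Q := by
    intro u hu
    by_contra hc
    have huw : u ≠ w := fun h => absurd hu (by rw [h]; exact lt_irrefl _)
    exact absurd (ky_le_pos (hmin u hc huw)) (not_le.mpr hu)
  have hQ'ne : ∀ v, v ∉ insert w Q → v ∉ Q ∧ v ≠ w := fun v hv =>
    ⟨fun h => hv (Finset.mem_insert_of_mem h), fun h => hv (h ▸ Finset.mem_insert_self _ _)⟩
  have hww1 : w - 1 ≠ w := fun h => one_ne_zero' hn (sub_eq_self.mp h)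
  have hw1w : w + 1 ≠ w := fun h => one_ne_zero' hn (by
    have := add_eq_left.mp h; exact_mod_cast this)
  refine ⟨w, hw, hDC', ?_⟩
  have hlay := hlayne hn alt distinct
  rcases lt_trichotomy (p (w+1)) (p w) with hlr | heq | hlr
  · -- DEATH
    have hw2 : p (w-1) < p w := (hside alt w).mp hlr
    have hwm1Q : w - 1 ∈ Q := vlt _ hw2
    have hwp1Q : w + 1 ∈ Q := vlt _ hlr
    obtain ⟨u0, hu0mem, hu0ne⟩ := Finset.exists_mem_ne (s := univ \ Q) (by omega) w
    have hu0 : u0 ∉ Q := (Finset.mem_sdiff.mp hu0mem).2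
    have hwu0 : w - u0 ≠ 0 := sub_ne_zero_of_ne (Ne.symm hu0ne)
    have hexb : ∃ m : ℕ, 0 < m ∧ w - ((m : ℕ) : ZMod n) ∉ Q := by
      refine ⟨(w - u0).val, ZMod.val_pos.mpr hwu0, ?_⟩
      rw [ZMod.natCast_rightInverse, sub_sub_cancel]
      exact hu0
    classical
    set m1 := Nat.find hexb with hm1def
    have hm1pos : 0 < m1 := (Nat.find_spec hexb).1
    have hv0Q : w - ((m1 : ℕ) : ZMod n) ∉ Q := (Nat.find_spec hexb).2
    have hm1le : m1 ≤ (w - u0).val := Nat.find_min' _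
      ⟨ZMod.val_pos.mpr hwu0, by rw [ZMod.natCast_rightInverse, sub_sub_cancel]; exact hu0⟩
    have hm1lt : m1 < n := lt_of_le_of_lt hm1le (ZMod.val_lt _)
    have hbmem : ∀ k : ℕ, 0 < k → k < m1 → w - ((k : ℕ) : ZMod n) ∈ Q := by
      intro k h1 h2
      by_contra hc
      exact (Nat.find_min hexb h2) ⟨h1, hc⟩
    set v0 := w - ((m1 : ℕ) : ZMod n) with hv0def
    have hv0w : v0 ≠ w := by
      intro h
      exact zc hn hm1pos hm1lt (by rwa [hv0def, sub_eq_self] at h)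
    have hm1two : 2 ≤ m1 := by
      by_contra hc
      have h1 : m1 = 1 := by omega
      have he : v0 = w - 1 := by rw [hv0def, h1, Nat.cast_one]
      exact hv0Q (he ▸ hwm1Q)
    have hmv0 : mQ Q v0 = m1 := by
      apply mq_unique hv0Q hm1pos
      · rw [show v0 + ((m1 : ℕ) : ZMod n) = w from by rw [hv0def]; ring]
        exact hw
      · intro k h1 h2
        have he : v0 + ((k : ℕ) : ZMod n) = w - (((m1 - k) : ℕ) : ZMod n) := by
          rw [hv0def]
          push_cast [Nat.cast_sub (le_of_lt h2)]
          ring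
        rw [he]
        exact hbmem _ (by omega) (by omega)
    have hmwpos : 0 < mQ Q w := mq_pos hw
    have hmw2 : 2 ≤ mQ Q w := by
      by_contra hc
      have h1 : mQ Q w = 1 := by omega
      have := mq_notin hw
      rw [h1, Nat.cast_one] at this
      exact this hwp1Q
    have hmwlt : mQ Q w < n := mq_lt hw hu0 hu0ne
    set mw := mQ Q w with hmwdef
    have hNw : w + ((mw : ℕ) : ZMod n) ∉ Q := mq_notin hw
    have hNwne : w + ((mw : ℕ) : ZMod n) ≠ w := fun h =>
      zc hn hmwpos hmwlt (add_eq_left.mp h)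
    have huniq : ∀ v, v ∉ Q → v + ((mQ Q v : ℕ) : ZMod n) = w → v = v0 := by
      intro v hv h
      have hm := mq_pos hv
      have hle : m1 ≤ mQ Q v := Nat.find_min' hexb
        ⟨hm, by rw [show w - ((mQ Q v : ℕ) : ZMod n) = v from by rw [← h]; ring]; exact hv⟩
      rcases eq_or_lt_of_le hle with he | hlt2
      · rw [hv0def, he, ← h]; ring
      · exfalso
        have hmem := mq_mem hv (k := mQ Q v - m1) (by omega) (by omega)
        have he2 : v + (((mQ Q v - m1) : ℕ) : ZMod n) = v0 := by
          rw [hv0def]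
          push_cast [Nat.cast_sub (le_of_lt hlt2)]
          rw [← h]
          ring
        rw [he2] at hmem
        exact hv0Q hmem
    have hv0nQ' : v0 ∉ insert w Q := by
      simp only [Finset.mem_insert]
      push_neg
      exact ⟨hv0w, hv0Q⟩
    have hm'_v0 : mQ (insert w Q) v0 = m1 + mw := by
      apply mq_unique hv0nQ' (by omega)
      · have he : v0 + (((m1 + mw) : ℕ) : ZMod n) = w + ((mw : ℕ) : ZMod n) := by
          rw [hv0def]; push_cast; ring
        rw [he]
        simp only [Finset.mem_insert]
        push_neg
        exact ⟨hNwne, hNw⟩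
      · intro k h1 h2
        rcases lt_trichotomy k m1 with h | h | h
        · exact Finset.mem_insert_of_mem (by rw [← hmv0] at h; exact mq_mem hv0Q h1 h)
        · subst h
          rw [show v0 + ((m1 : ℕ) : ZMod n) = w from by rw [hv0def]; ring]
          exact Finset.mem_insert_self _ _
        · have he : v0 + ((k : ℕ) : ZMod n) = w + (((k - m1) : ℕ) : ZMod n) := by
            rw [hv0def]
            push_cast [Nat.cast_sub (le_of_lt h)]
            ring
          rw [he]
          exact Finset.mem_insert_of_mem (mq_mem hw (by omega) (by omega))
    have hm'_other : ∀ v, v ∉ insert w Q → v ≠ v0 → mQ (insert w Q) v = mQ Q v := by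
      intro v hv hvv0
      obtain ⟨hvQ, hvne⟩ := hQ'ne v hv
      apply mq_unique hv (mq_pos hvQ)
      · simp only [Finset.mem_insert]
        push_neg
        exact ⟨fun h => hvv0 (huniq v hvQ h), mq_notin hvQ⟩
      · intro k h1 h2
        exact Finset.mem_insert_of_mem (mq_mem hvQ h1 h2)
    -- geometric set-up
    have hv0p1Q : v0 + 1 ∈ Q := by
      have := hbmem (m1 - 1) (by omega) (by omega)
      rwa [show w - (((m1 - 1) : ℕ) : ZMod n) = v0 + 1 from by
        rw [hv0def]; push_cast [Nat.cast_sub (by omega : 1 ≤ m1)]; ring] at this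
    have hzQ : w + ((mw : ℕ) : ZMod n) - 1 ∈ Q := by
      have := mq_mem hw (k := mw - 1) (by omega) (by omega)
      rwa [show (((mw - 1) : ℕ) : ZMod n) = ((mw : ℕ) : ZMod n) - 1 from by
        push_cast [Nat.cast_sub (by omega : 1 ≤ mw)]; ring, ← add_sub_assoc] at this
    have hv0w1 : v0 ≠ w - 1 := fun h => (h ▸ hv0Q) hwm1Q
    have hzw1 : w + ((mw : ℕ) : ZMod n) - 1 ≠ w - 1 := by
      intro h
      rw [sub_left_inj] at h
      exact hNwne h
    have hzw : w + ((mw : ℕ) : ZMod n) - 1 ≠ w := fun h => hw (h ▸ hzQ)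
    have hv0z : v0 ≠ w + ((mw : ℕ) : ZMod n) - 1 := by
      intro h
      have : v0 + 1 = w + ((mw : ℕ) : ZMod n) := by rw [h]; ring
      rw [this] at hv0p1Q
      exact hNw hv0p1Q
    -- strict positions of processed endpoints
    have pad : ∀ aa bb : ZMod n, aa ∈ Q → bb ∉ Q → (aa = bb + 1 ∨ aa = bb - 1) →
        p aa < p w := by
      intro aa bb haa hbb hadj
      have h1 : p aa ≤ p w := ky_le_pos (hDC _ haa _ hw)
      rcases eq_or_lt_of_le h1 with he | h2
      · exfalso
        have hkk := ky_snd (p := p) (lay := lay) (hDC _ haa _ hw) he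
        simp only [if_pos hlr] at hkk
        have haa1 : p (aa + 1) < p aa := by
          by_contra hc
          simp only [if_neg hc] at hkk
          rcases hkk with h | ⟨h, _⟩ <;> omega
        have haa2 : p (aa - 1) < p aa := (hside alt aa).mp haa1
        have hbblt : p bb < p w := by
          rcases hadj with h | h
          · have e : bb = aa - 1 := by rw [h]; ring
            rw [e, ← he]; exact haa2
          · have e : bb = aa + 1 := by rw [h]; ring
            rw [e, ← he]; exact haa1
        exact hbb (vlt _ hbblt)
      · exact h2
    have hp_v01 : p (v0 + 1) < p w := pad (v0 + 1) v0 hv0p1Q hv0Q (Or.inl rfl)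
    have hp_v0 : p w ≤ p v0 := ky_le_pos (hmin v0 hv0Q hv0w)
    have hp_z : p (w + ((mw : ℕ) : ZMod n) - 1) < p w :=
      pad _ (w + ((mw : ℕ) : ZMod n)) hzQ hNw (Or.inr (by ring))
    have hp_N : p w ≤ p (w + ((mw : ℕ) : ZMod n)) := ky_le_pos (hmin _ hNw hNwne)
    -- eni for the two far ends of the merging runs
    have hE_v0 := eni hn alt distinct noPenetrate noCross hDC hw hmin
      (k := v0) (a := v0 + 1) (b := v0) (Or.inr ⟨rfl, rfl⟩) hv0p1Q hv0Q hv0w hv0w1 hv0w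
    have hE_z := eni hn alt distinct noPenetrate noCross hDC hw hmin
      (k := w + ((mw : ℕ) : ZMod n) - 1) (a := w + ((mw : ℕ) : ZMod n) - 1)
      (b := w + ((mw : ℕ) : ZMod n)) (Or.inl ⟨rfl, by ring⟩) hzQ hNw hNwne hzw1 hzw
    -- pairwise layer distinctness among the four segments v0, w-1, w, z
    have dau : lay v0 ≠ lay (w - 1) :=
      ovl distinct (x0 := p w) hv0w1 (Or.inr ⟨rfl, rfl⟩) (Or.inl ⟨rfl, by ring⟩)
        hp_v01 hp_v0 hw2 le_rfl
    have dav : lay v0 ≠ lay w :=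
      ovl distinct (x0 := p w) hv0w (Or.inr ⟨rfl, rfl⟩) (Or.inr ⟨rfl, rfl⟩)
        hp_v01 hp_v0 hlr le_rfl
    have daw : lay v0 ≠ lay (w + ((mw : ℕ) : ZMod n) - 1) :=
      ovl distinct (x0 := p w) hv0z (Or.inr ⟨rfl, rfl⟩) (Or.inl ⟨rfl, by ring⟩)
        hp_v01 hp_v0 hp_z hp_N
    have duv : lay (w - 1) ≠ lay w := (hlay w).symm
    have duw : lay (w - 1) ≠ lay (w + ((mw : ℕ) : ZMod n) - 1) :=
      ovl distinct (x0 := p w) (fun h => hzw1 h.symm) (Or.inl ⟨rfl, by ring⟩)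
        (Or.inl ⟨rfl, by ring⟩) hw2 le_rfl hp_z hp_N
    have dvw : lay w ≠ lay (w + ((mw : ℕ) : ZMod n) - 1) :=
      ovl distinct (x0 := p w) (fun h => hzw h.symm) (Or.inr ⟨rfl, rfl⟩)
        (Or.inl ⟨rfl, by ring⟩) hlr le_rfl hp_z hp_N
    -- the old non-interleaving between the two merging runs
    have hItl0 : ¬ Interleaved (lay v0) (lay (w - 1)) (lay w)
        (lay (w + ((mw : ℕ) : ZMod n) - 1)) := by
      have := hI2 v0 hv0Q w hw hv0w
      rwa [hmv0, ← hmwdef, show v0 + ((m1 : ℕ) : ZMod n) - 1 = w - 1 from by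
        rw [hv0def]; ring] at this
    -- key fact for other runs
    have key : ∀ u, u ∉ Q → u ≠ w → u ≠ v0 → 2 ≤ mQ Q u →
        ¬ Interleaved (lay v0) (lay (w + ((mw : ℕ) : ZMod n) - 1)) (lay u)
          (lay (u + ((mQ Q u : ℕ) : ZMod n) - 1)) := by
      intro u huQ hune huv0 hm2
      have hNu : u + ((mQ Q u : ℕ) : ZMod n) ∉ Q := mq_notin huQ
      have hNune : u + ((mQ Q u : ℕ) : ZMod n) ≠ w := fun h => huv0 (huniq u huQ h)
      have hu1 : u + 1 ∈ Q := by
        have := mq_mem huQ (k := 1) one_pos (by omega)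
        rwa [Nat.cast_one] at this
      have huw1 : u ≠ w - 1 := fun h => huQ (h ▸ hwm1Q)
      have hcast : ((mQ Q u - 1 : ℕ) : ZMod n) = ((mQ Q u : ℕ) : ZMod n) - 1 := by
        push_cast [Nat.cast_sub (by omega : 1 ≤ mQ Q u)]
        ring
      have hyQ : u + ((mQ Q u : ℕ) : ZMod n) - 1 ∈ Q := by
        have := mq_mem huQ (k := mQ Q u - 1) (by omega) (by omega)
        rwa [hcast, ← add_sub_assoc] at this
      have hyw1 : u + ((mQ Q u : ℕ) : ZMod n) - 1 ≠ w - 1 := by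
        intro h
        rw [sub_left_inj] at h
        exact hNune h
      have hyw : u + ((mQ Q u : ℕ) : ZMod n) - 1 ≠ w := fun h => hw (h ▸ hyQ)
      -- eni for the ends of run u
      have hC := eni hn alt distinct noPenetrate noCross hDC hw hmin
        (k := u) (a := u + 1) (b := u) (Or.inr ⟨rfl, rfl⟩) hu1 huQ hune huw1 hune
      have hD := eni hn alt distinct noPenetrate noCross hDC hw hmin
        (k := u + ((mQ Q u : ℕ) : ZMod n) - 1) (a := u + ((mQ Q u : ℕ) : ZMod n) - 1)
        (b := u + ((mQ Q u : ℕ) : ZMod n)) (Or.inl ⟨rfl, by ring⟩) hyQ hNu hNune hyw1 hyw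
      -- index distinctness of u, y from v0, w-1, w, z
      have huz : u ≠ w + ((mw : ℕ) : ZMod n) - 1 := by
        intro h
        have : u + 1 = w + ((mw : ℕ) : ZMod n) := by rw [h]; ring
        rw [this] at hu1
        exact hNw hu1
      have hyv0 : u + ((mQ Q u : ℕ) : ZMod n) - 1 ≠ v0 := by
        intro h
        have : u + ((mQ Q u : ℕ) : ZMod n) = v0 + 1 := by rw [← h]; ring
        rw [this] at hNu
        exact hNu hv0p1Q
      have hyz : u + ((mQ Q u : ℕ) : ZMod n) - 1 ≠ w + ((mw : ℕ) : ZMod n) - 1 := by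
        intro h
        rw [sub_left_inj] at h
        set mu := mQ Q u with hmu
        rcases lt_trichotomy mu mw with hlt | heq2 | hgt
        · have h2 := congrArg (fun x => x - ((mu : ℕ) : ZMod n)) h
          simp only [add_sub_cancel_right] at h2
          have he : u = w + (((mw - mu) : ℕ) : ZMod n) := by
            rw [h2]
            push_cast [Nat.cast_sub (le_of_lt hlt)]
            ring
          rw [he] at huQ
          exact huQ (mq_mem hw (by omega) (by omega))
        · rw [heq2] at h
          exact hune (by
            have h2 := congrArg (fun x => x - ((mw : ℕ) : ZMod n)) h
            simpa [add_sub_cancel_right] using h2)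
        · have h2 := congrArg (fun x => x - ((mw : ℕ) : ZMod n)) h
          simp only [add_sub_cancel_right] at h2
          have he : w = u + (((mu - mw) : ℕ) : ZMod n) := by
            rw [← h2]
            push_cast [Nat.cast_sub (le_of_lt hgt)]
            ring
          rw [he] at hw
          exact hw (mq_mem huQ (by omega) (by omega))
      -- positions for run u's ends
      have hp_u1 : p (u + 1) < p w := pad (u + 1) u hu1 huQ (Or.inl rfl)
      have hp_u : p w ≤ p u := ky_le_pos (hmin u huQ hune)
      have hp_y : p (u + ((mQ Q u : ℕ) : ZMod n) - 1) < p w :=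
        pad _ (u + ((mQ Q u : ℕ) : ZMod n)) hyQ hNu (Or.inr (by ring))
      have hp_Ny : p w ≤ p (u + ((mQ Q u : ℕ) : ZMod n)) := ky_le_pos (hmin _ hNu hNune)
      -- layer distinctness: C = lay u, D = lay y versus the four
      have dCa : lay u ≠ lay v0 :=
        ovl distinct (x0 := p w) huv0 (Or.inr ⟨rfl, rfl⟩) (Or.inr ⟨rfl, rfl⟩)
          hp_u1 hp_u hp_v01 hp_v0
      have dCu : lay u ≠ lay (w - 1) :=
        ovl distinct (x0 := p w) huw1 (Or.inr ⟨rfl, rfl⟩) (Or.inl ⟨rfl, by ring⟩)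
          hp_u1 hp_u hw2 le_rfl
      have dCv : lay u ≠ lay w :=
        ovl distinct (x0 := p w) hune (Or.inr ⟨rfl, rfl⟩) (Or.inr ⟨rfl, rfl⟩)
          hp_u1 hp_u hlr le_rfl
      have dCw : lay u ≠ lay (w + ((mw : ℕ) : ZMod n) - 1) :=
        ovl distinct (x0 := p w) huz (Or.inr ⟨rfl, rfl⟩) (Or.inl ⟨rfl, by ring⟩)
          hp_u1 hp_u hp_z hp_N
      have dDa : lay (u + ((mQ Q u : ℕ) : ZMod n) - 1) ≠ lay v0 :=
        ovl distinct (x0 := p w) hyv0 (Or.inl ⟨rfl, by ring⟩) (Or.inr ⟨rfl, rfl⟩)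
          hp_y hp_Ny hp_v01 hp_v0
      have dDu : lay (u + ((mQ Q u : ℕ) : ZMod n) - 1) ≠ lay (w - 1) :=
        ovl distinct (x0 := p w) hyw1 (Or.inl ⟨rfl, by ring⟩) (Or.inl ⟨rfl, by ring⟩)
          hp_y hp_Ny hw2 le_rfl
      have dDv : lay (u + ((mQ Q u : ℕ) : ZMod n) - 1) ≠ lay w :=
        ovl distinct (x0 := p w) hyw (Or.inl ⟨rfl, by ring⟩) (Or.inr ⟨rfl, rfl⟩)
          hp_y hp_Ny hlr le_rfl
      have dDw : lay (u + ((mQ Q u : ℕ) : ZMod n) - 1) ≠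
          lay (w + ((mw : ℕ) : ZMod n) - 1) :=
        ovl distinct (x0 := p w) hyz (Or.inl ⟨rfl, by ring⟩) (Or.inl ⟨rfl, by ring⟩)
          hp_y hp_Ny hp_z hp_N
      have dCD : lay u ≠ lay (u + ((mQ Q u : ℕ) : ZMod n) - 1) := by
        have hidx : u ≠ u + ((mQ Q u : ℕ) : ZMod n) - 1 := by
          intro h
          have h2 : ((mQ Q u : ℕ) : ZMod n) - 1 = 0 := by linear_combination h.symm
          rw [← hcast] at h2
          have hle := mq_le huQ
          exact zc hn (k := mQ Q u - 1) (by omega) (by omega) h2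
        exact ovl distinct (x0 := p w) hidx (Or.inr ⟨rfl, rfl⟩) (Or.inl ⟨rfl, by ring⟩)
          hp_u1 hp_u hp_y hp_Ny
      -- old invariants
      have hIau : ¬ Interleaved (lay v0) (lay (w - 1)) (lay u)
          (lay (u + ((mQ Q u : ℕ) : ZMod n) - 1)) := by
        have := hI2 v0 hv0Q u huQ (fun h => huv0 h.symm)
        rwa [hmv0, show v0 + ((m1 : ℕ) : ZMod n) - 1 = w - 1 from by
          rw [hv0def]; ring] at this
      have hIvu : ¬ Interleaved (lay w) (lay (w + ((mw : ℕ) : ZMod n) - 1)) (lay u)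
          (lay (u + ((mQ Q u : ℕ) : ZMod n) - 1)) := by
        have := hI2 w hw u huQ (fun h => hune h.symm)
        rwa [← hmwdef] at this
      exact merge_notItl hIau hIvu hItl0 hC hD hE_v0 hE_z
        dau dav daw dCa.symm dDa.symm duv duw dCu.symm dDu.symm dvw dCv.symm dDv.symm
        dCw.symm dDw.symm dCD
    constructor
    · -- R1
      intro v hv
      by_cases hvv0 : v = v0
      · subst hvv0
        rw [hm'_v0]
        have hsplit : ∑ k ∈ Finset.Ico 1 (m1 + mw), sE p lay (v0 + (k : ZMod n)) =
            (∑ k ∈ Finset.Ico 1 m1, sE p lay (v0 + (k : ZMod n))) +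
            (sE p lay w +
              ∑ k ∈ Finset.Ico 1 mw, sE p lay (w + (k : ZMod n))) := by
          rw [← Finset.sum_Ico_consecutive _ (by omega : 1 ≤ m1) (by omega : m1 ≤ m1 + mw)]
          congr 1
          rw [Finset.sum_eq_sum_Ico_succ_bot (by omega : m1 < m1 + mw)]
          congr 1
          · rw [show v0 + ((m1 : ℕ) : ZMod n) = w from by rw [hv0def]; ring]
          · rw [Finset.sum_Ico_eq_sum_range, Finset.sum_Ico_eq_sum_range]
            have : m1 + mw - (m1 + 1) = mw - 1 := by omega
            rw [this]
            apply Finset.sum_congr rfl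
            intro i _
            congr 1
            rw [hv0def]
            push_cast
            ring
        rw [hsplit]
        have hT1 := hI1 v0 hv0Q
        rw [hmv0, show v0 + ((m1 : ℕ) : ZMod n) - 1 = w - 1 from by
          rw [hv0def]; ring] at hT1
        have hT2 := hI1 w hw
        rw [← hmwdef] at hT2
        rw [hT1, hT2, sE_left alt hw2 (hlay w)]
        rw [show v0 + (((m1 + mw) : ℕ) : ZMod n) - 1 = w + ((mw : ℕ) : ZMod n) - 1 from by
          rw [hv0def]; push_cast; ring]
        exact merge_sg hItl0 hE_v0 hE_z dau dav daw duv duw dvw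
      · rw [hm'_other v hv hvv0]
        exact hI1 v (hQ'ne v hv).1
    · -- R2
      intro v hv u hu hvu
      by_cases hvv0 : v = v0 <;> by_cases huv0 : u = v0
      · exact absurd (hvv0.trans huv0.symm) hvu
      · subst hvv0
        rw [hm'_v0, hm'_other u hu huv0]
        rw [show v0 + (((m1 + mw) : ℕ) : ZMod n) - 1 = w + ((mw : ℕ) : ZMod n) - 1 from by
          rw [hv0def]; push_cast; ring]
        obtain ⟨huQ, hune⟩ := hQ'ne u hu
        by_cases hm1' : mQ Q u = 1
        · rw [hm1', Nat.cast_one, add_sub_cancel_right]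
          exact notItl_degen_right _ _ _
        · exact key u huQ hune huv0 (by have := mq_pos huQ; omega)
      · subst huv0
        rw [hm'_v0, hm'_other v hv hvv0]
        rw [show v0 + (((m1 + mw) : ℕ) : ZMod n) - 1 = w + ((mw : ℕ) : ZMod n) - 1 from by
          rw [hv0def]; push_cast; ring]
        obtain ⟨hvQ, hvne⟩ := hQ'ne v hv
        rw [itl_comm]
        by_cases hm1' : mQ Q v = 1
        · rw [hm1', Nat.cast_one, add_sub_cancel_right]
          exact notItl_degen_right _ _ _
        · exact key v hvQ hvne hvv0 (by have := mq_pos hvQ; omega)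
      · rw [hm'_other v hv hvv0, hm'_other u hu huv0]
        exact hI2 v (hQ'ne v hv).1 u (hQ'ne u hu).1 hvu
  · exact absurd heq (hne alt w)
  · -- BIRTH : p w < p (w+1)
    have hw2 : p w < p (w-1) := by
      rcases lt_trichotomy (p (w-1)) (p w) with h | h | h
      · exact absurd ((hside alt w).mpr h) (not_lt.mpr (le_of_lt hlr))
      · exact absurd h (hne' alt w).symm
      · exact h
    have hwm1 : w - 1 ∉ Q := by
      intro h
      have := ky_le_pos (hDC _ h w hw)
      linarith
    have hwp1 : w + 1 ∉ Q := by
      intro h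
      have := ky_le_pos (hDC _ h w hw)
      linarith
    have hm_w1 : mQ Q (w-1) = 1 := by
      apply mq_unique hwm1 one_pos
      · rw [Nat.cast_one, sub_add_cancel]; exact hw
      · intro k h1 h2; omega
    have hnotw : ∀ v, v ∉ Q → v ≠ w - 1 → v + ((mQ Q v : ℕ) : ZMod n) ≠ w := by
      intro v hv hvw h
      rcases Nat.lt_or_ge 1 (mQ Q v) with h2 | h2
      · have hmem := mq_mem hv (k := mQ Q v - 1) (by omega) (by omega)
        have he : v + (((mQ Q v - 1 : ℕ)) : ZMod n) = w - 1 := by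
          push_cast [Nat.cast_sub (by omega : 1 ≤ mQ Q v)]
          rw [← h]; ring
        rw [he] at hmem; exact hwm1 hmem
      · have h1 : mQ Q v = 1 := le_antisymm h2 (mq_pos hv)
        rw [h1, Nat.cast_one] at h
        exact hvw (by rw [← h]; ring)
    have hw1nQ' : w + 1 ∉ insert w Q := by
      simp only [Finset.mem_insert]
      push_neg
      exact ⟨hw1w, hwp1⟩
    have hwm1nQ' : w - 1 ∉ insert w Q := by
      simp only [Finset.mem_insert]
      push_neg
      exact ⟨hww1, hwm1⟩
    have hm'_w1 : mQ (insert w Q) (w-1) = 2 := by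
      apply mq_unique hwm1nQ' two_pos
      · rw [show (((2:ℕ)) : ZMod n) = 2 from by push_cast; ring,
          show w - 1 + 2 = w + 1 from by ring]
        exact hw1nQ'
      · intro k h1 h2
        have hk1 : k = 1 := by omega
        subst hk1
        rw [Nat.cast_one, sub_add_cancel]
        exact Finset.mem_insert_self _ _
    have hm'_other : ∀ v, v ∉ insert w Q → v ≠ w - 1 →
        mQ (insert w Q) v = mQ Q v := by
      intro v hv hvw
      obtain ⟨hvQ, hvne⟩ := hQ'ne v hv
      apply mq_unique hv (mq_pos hvQ)
      · simp only [Finset.mem_insert]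
        push_neg
        exact ⟨hnotw v hvQ hvw, mq_notin hvQ⟩
      · intro k h1 h2
        exact Finset.mem_insert_of_mem (mq_mem hvQ h1 h2)
    -- key : each other nontrivial run avoids the new pair
    have key : ∀ u, u ∉ Q → u ≠ w → u ≠ w - 1 → 2 ≤ mQ Q u →
        ¬ Interleaved (lay (w-1)) (lay w) (lay u)
          (lay (u + ((mQ Q u : ℕ) : ZMod n) - 1)) := by
      intro u huQ hune huw hm2
      have hNu := hnotw u huQ huw
      have hNu' := mq_notin huQ
      have hu1 : u + 1 ∈ Q := by
        have := mq_mem huQ (k := 1) one_pos (by omega)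
        rwa [Nat.cast_one] at this
      have hC := eni hn alt distinct noPenetrate noCross hDC hw hmin
        (k := u) (a := u + 1) (b := u) (Or.inr ⟨rfl, rfl⟩) hu1 huQ hune huw hune
      have hcast : ((mQ Q u - 1 : ℕ) : ZMod n) = ((mQ Q u : ℕ) : ZMod n) - 1 := by
        push_cast [Nat.cast_sub (by omega : 1 ≤ mQ Q u)]
        ring
      have hyQ : u + ((mQ Q u : ℕ) : ZMod n) - 1 ∈ Q := by
        have := mq_mem huQ (k := mQ Q u - 1) (by omega) (by omega)
        rwa [hcast, ← add_sub_assoc] at this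
      have hyw1 : u + ((mQ Q u : ℕ) : ZMod n) - 1 ≠ w - 1 := by
        intro h
        rw [sub_left_inj] at h
        exact hNu h
      have hyw : u + ((mQ Q u : ℕ) : ZMod n) - 1 ≠ w := fun h => hw (h ▸ hyQ)
      have hD := eni hn alt distinct noPenetrate noCross hDC hw hmin
        (k := u + ((mQ Q u : ℕ) : ZMod n) - 1) (a := u + ((mQ Q u : ℕ) : ZMod n) - 1)
        (b := u + ((mQ Q u : ℕ) : ZMod n)) (Or.inl ⟨rfl, by ring⟩) hyQ hNu' hNu hyw1 hyw
      exact notItl_of_outside hC hD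
    constructor
    · -- R1
      intro v hv
      by_cases hvw : v = w - 1
      · subst hvw
        rw [hm'_w1]
        rw [Finset.sum_Ico_eq_sum_range]
        norm_num
        rw [show w - 1 + 2 - 1 = w from by ring]
        exact sE_right alt hw2 (hlay w)
      · rw [hm'_other v hv hvw]
        exact hI1 v (hQ'ne v hv).1
    · -- R2
      intro v hv u hu hvu
      by_cases hvw : v = w - 1 <;> by_cases huw : u = w - 1
      · exact absurd (hvw.trans huw.symm) hvu
      · subst hvw
        rw [hm'_w1, hm'_other u hu huw]
        rw [show (w - 1 + ((2:ℕ) : ZMod n) - 1) = w from by push_cast; ring]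
        obtain ⟨huQ, hune⟩ := hQ'ne u hu
        by_cases hm1 : mQ Q u = 1
        · rw [hm1, Nat.cast_one, add_sub_cancel_right]
          exact notItl_degen_right _ _ _
        · exact key u huQ hune huw (by have := mq_pos huQ; omega)
      · subst huw
        rw [hm'_w1, hm'_other v hv hvw]
        rw [show (w - 1 + ((2:ℕ) : ZMod n) - 1) = w from by push_cast; ring]
        obtain ⟨hvQ, hvne⟩ := hQ'ne v hv
        rw [itl_comm]
        by_cases hm1 : mQ Q v = 1
        · rw [hm1, Nat.cast_one, add_sub_cancel_right]
          exact notItl_degen_right _ _ _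
        · exact key v hvQ hvne hvw (by have := mq_pos hvQ; omega)
      · rw [hm'_other v hv hvw, hm'_other u hu huw]
        exact hI2 v (hQ'ne v hv).1 u (hQ'ne u hu).1 hvu

lemma final (hn : 2 ≤ n)
    (alt : ∀ i : ZMod n, (p (i + 1) - p i) * (p (i + 2) - p (i + 1)) < 0)
    (distinct : ∀ i j : ZMod n, i ≠ j →
      (Set.Ioo (min (p i) (p (i + 1))) (max (p i) (p (i + 1))) ∩
        Set.Ioo (min (p j) (p (j + 1))) (max (p j) (p (j + 1)))).Nonempty →
      lay i ≠ lay j)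
    {Q : Finset (ZMod n)} {w : ZMod n} (hDC : FF.DC p lay Q)
    (hI1 : FF.R1 p lay Q) (hcompl : univ \ Q = {w}) :
    (∑ i : ZMod n, FF.sE p lay i = 2) ∨ (∑ i : ZMod n, FF.sE p lay i = -2) := by
  have hw : w ∉ Q := by
    have h : w ∈ univ \ Q := by rw [hcompl]; exact Finset.mem_singleton_self w
    exact (Finset.mem_sdiff.mp h).2
  have hall : ∀ u : ZMod n, u ≠ w → u ∈ Q := by
    intro u hu
    by_contra hc
    have h : u ∈ univ \ Q := Finset.mem_sdiff.mpr ⟨Finset.mem_univ _, hc⟩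
    rw [hcompl] at h
    exact hu (Finset.mem_singleton.mp h)
  have hm : mQ Q w = n := by
    apply mq_unique hw (by omega)
    · rwa [ZMod.natCast_self, add_zero]
    · intro k h1 h2
      exact hall _ (fun h => zc hn h1 h2 (add_eq_left.mp h))
  have hw1 : w - 1 ≠ w := fun h => one_ne_zero' hn (sub_eq_self.mp h)
  have hQw1 : w - 1 ∈ Q := hall _ hw1
  have hp1 : p (w - 1) < p w :=
    lt_of_le_of_ne (ky_le_pos (hDC _ hQw1 w hw)) (Ne.symm (hne' alt w))
  have hlayw := hlayne hn alt distinct w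
  have hSE := hI1 w hw
  rw [hm, ZMod.natCast_self, add_zero] at hSE
  have htot : ∑ i : ZMod n, FF.sE p lay i =
      ∑ k ∈ Finset.range n, FF.sE p lay (w + (k : ZMod n)) := by
    rw [← Equiv.sum_comp (Equiv.addLeft w) (FF.sE p lay)]
    apply Finset.sum_nbij' (i := fun (x : ZMod n) => x.val) (j := fun (k : ℕ) => (k : ZMod n))
    · intro a _
      exact Finset.mem_range.mpr (ZMod.val_lt a)
    · intro a _
      exact Finset.mem_univ _
    · intro a _
      exact ZMod.natCast_rightInverse a
    · intro a ha
      exact ZMod.val_cast_of_lt (Finset.mem_range.mp ha)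
    · intro a _
      simp only [Equiv.coe_addLeft]
      rw [ZMod.natCast_rightInverse a]
  rw [htot, Finset.range_eq_Ico, Finset.sum_eq_sum_Ico_succ_bot (by omega : 0 < n)]
  rw [Nat.cast_zero, add_zero, hSE]
  rw [sE_left alt hp1 hlayw]
  rw [show lay (w - 1) - lay w = -(lay w - lay (w - 1)) from by ring, sg_neg, neg_neg]
  have hne0 : lay w - lay (w - 1) ≠ 0 := sub_ne_zero.mpr hlayw
  simp only [sg]
  split_ifs <;> omega

lemma driver (hn : 2 ≤ n)
    (alt : ∀ i : ZMod n, (p (i + 1) - p i) * (p (i + 2) - p (i + 1)) < 0)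
    (distinct : ∀ i j : ZMod n, i ≠ j →
      (Set.Ioo (min (p i) (p (i + 1))) (max (p i) (p (i + 1))) ∩
        Set.Ioo (min (p j) (p (j + 1))) (max (p j) (p (j + 1)))).Nonempty →
      lay i ≠ lay j)
    (noPenetrate : ∀ i j : ZMod n,
      p i ∈ Set.Ioo (min (p j) (p (j + 1))) (max (p j) (p (j + 1))) →
      ¬ (min (lay (i - 1)) (lay i) < lay j ∧
         lay j < max (lay (i - 1)) (lay i)))
    (noCross : ∀ i j : ZMod n, i ≠ j → p i = p j →
      0 < (p (i + 1) - p i) * (p (j + 1) - p j) →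
      ¬ Interleaved (lay (i - 1)) (lay i) (lay (j - 1)) (lay j)) :
    ∀ j : ℕ, ∀ Q : Finset (ZMod n), FF.DC p lay Q → FF.R1 p lay Q → FF.R2 p lay Q →
      (univ \ Q).card = j + 1 →
      (∑ i : ZMod n, FF.sE p lay i = 2) ∨ (∑ i : ZMod n, FF.sE p lay i = -2) := by
  intro j
  induction j with
  | zero =>
    intro Q hDC hI1 _ hcard
    obtain ⟨w, hc⟩ := Finset.card_eq_one.mp hcard
    exact final hn alt distinct hDC hI1 hc
  | succ j ih =>
    intro Q hDC hI1 hI2 hcard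
    obtain ⟨w, hw, hDC', hI1', hI2'⟩ :=
      step hn alt distinct noPenetrate noCross hDC hI1 hI2 (by omega)
    apply ih _ hDC' hI1' hI2'
    have he : univ \ insert w Q = (univ \ Q).erase w := by
      ext x
      simp only [Finset.mem_sdiff, Finset.mem_erase, Finset.mem_insert, Finset.mem_univ,
        true_and]
      tauto
    rw [he, Finset.card_erase_of_mem (Finset.mem_sdiff.mpr ⟨Finset.mem_univ _, hw⟩), hcard]
    omega

lemma total (hn : 2 ≤ n)
    (alt : ∀ i : ZMod n, (p (i + 1) - p i) * (p (i + 2) - p (i + 1)) < 0)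
    (distinct : ∀ i j : ZMod n, i ≠ j →
      (Set.Ioo (min (p i) (p (i + 1))) (max (p i) (p (i + 1))) ∩
        Set.Ioo (min (p j) (p (j + 1))) (max (p j) (p (j + 1)))).Nonempty →
      lay i ≠ lay j)
    (noPenetrate : ∀ i j : ZMod n,
      p i ∈ Set.Ioo (min (p j) (p (j + 1))) (max (p j) (p (j + 1))) →
      ¬ (min (lay (i - 1)) (lay i) < lay j ∧
         lay j < max (lay (i - 1)) (lay i)))
    (noCross : ∀ i j : ZMod n, i ≠ j → p i = p j →
      0 < (p (i + 1) - p i) * (p (j + 1) - p j) →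
      ¬ Interleaved (lay (i - 1)) (lay i) (lay (j - 1)) (lay j)) :
    (∑ i : ZMod n, FF.sE p lay i = 2) ∨ (∑ i : ZMod n, FF.sE p lay i = -2) := by
  apply driver hn alt distinct noPenetrate noCross (n - 1) ∅
  · intro a ha
    exact absurd ha (Finset.notMem_empty a)
  · intro v hv
    have hm : mQ (∅ : Finset (ZMod n)) v = 1 := by
      apply mq_unique (Finset.notMem_empty v) one_pos (Finset.notMem_empty _)
      intro k h1 h2
      omega
    rw [hm, Nat.cast_one, add_sub_cancel_right, sub_self]
    simp [sg]
  · intro v hv u hu hvu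
    have hm : mQ (∅ : Finset (ZMod n)) v = 1 := by
      apply mq_unique (Finset.notMem_empty v) one_pos (Finset.notMem_empty _)
      intro k h1 h2
      omega
    rw [hm, Nat.cast_one, add_sub_cancel_right]
    exact notItl_degen_left _ _ _
  · rw [Finset.sdiff_empty, Finset.card_univ, ZMod.card]
    omega

end Lemmas

end FF

theorem flat_folded_loop_convex_sub_reflex_eq_two (n : ℕ) [NeZero n]
    (p : ZMod n → ℝ) (lay : ZMod n → ℤ)
    (alt : ∀ i : ZMod n, (p (i + 1) - p i) * (p (i + 2) - p (i + 1)) < 0)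
    (distinct : ∀ i j : ZMod n, i ≠ j →
      (Set.Ioo (min (p i) (p (i + 1))) (max (p i) (p (i + 1))) ∩
        Set.Ioo (min (p j) (p (j + 1))) (max (p j) (p (j + 1)))).Nonempty →
      lay i ≠ lay j)
    (noPenetrate : ∀ i j : ZMod n,
      p i ∈ Set.Ioo (min (p j) (p (j + 1))) (max (p j) (p (j + 1))) →
      ¬ (min (lay (i - 1)) (lay i) < lay j ∧
         lay j < max (lay (i - 1)) (lay i)))
    (noCross : ∀ i j : ZMod n, i ≠ j → p i = p j →
      0 < (p (i + 1) - p i) * (p (j + 1) - p j) →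
      ¬ Interleaved (lay (i - 1)) (lay i) (lay (j - 1)) (lay j)) :
    ((((univ : Finset (ZMod n)).filter fun i =>
        0 < (p i - p (i - 1)) * ((lay i : ℝ) - (lay (i - 1) : ℝ))).card : ℤ) -
      (((univ : Finset (ZMod n)).filter fun i =>
        (p i - p (i - 1)) * ((lay i : ℝ) - (lay (i - 1) : ℝ)) < 0).card : ℤ) = 2) ∨
    ((((univ : Finset (ZMod n)).filter fun i =>
        0 < (p i - p (i - 1)) * ((lay i : ℝ) - (lay (i - 1) : ℝ))).card : ℤ) -
      (((univ : Finset (ZMod n)).filter fun i =>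
        (p i - p (i - 1)) * ((lay i : ℝ) - (lay (i - 1) : ℝ)) < 0).card : ℤ) = -2) := by
  classical
  have hn2 : 2 ≤ n := FF.n_two alt
  have hsum := FF.total hn2 alt distinct noPenetrate noCross
  have hlay := FF.hlayne hn2 alt distinct
  have nz : ∀ i : ZMod n, (p i - p (i-1)) * ((lay i : ℝ) - (lay (i-1) : ℝ)) ≠ 0 := by
    intro i
    apply mul_ne_zero
    · exact sub_ne_zero.mpr (FF.hne' alt i)
    · exact sub_ne_zero.mpr (by exact_mod_cast hlay i)
  have hconv : ∑ i : ZMod n, FF.sE p lay i =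
      (((univ : Finset (ZMod n)).filter fun i =>
        0 < (p i - p (i - 1)) * ((lay i : ℝ) - (lay (i - 1) : ℝ))).card : ℤ)
      - (((univ : Finset (ZMod n)).filter fun i =>
        (p i - p (i - 1)) * ((lay i : ℝ) - (lay (i - 1) : ℝ)) < 0).card : ℤ) := by
    have h1 : ∑ i : ZMod n, FF.sE p lay i =
        ∑ i : ZMod n, (if 0 < (p i - p (i - 1)) * ((lay i : ℝ) - (lay (i - 1) : ℝ))
          then (1:ℤ) else -1) := by
      apply Finset.sum_congr rfl
      intro i _
      rw [FF.sE]
    rw [h1, Finset.sum_ite]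
    rw [Finset.sum_const, Finset.sum_const, nsmul_eq_mul, nsmul_eq_mul, mul_one, mul_neg_one]
    have h2 : ((univ : Finset (ZMod n)).filter fun i =>
        ¬ 0 < (p i - p (i - 1)) * ((lay i : ℝ) - (lay (i - 1) : ℝ))) =
        ((univ : Finset (ZMod n)).filter fun i =>
        (p i - p (i - 1)) * ((lay i : ℝ) - (lay (i - 1) : ℝ)) < 0) := by
      apply Finset.filter_congr
      intro i _
      constructor
      · intro h
        exact lt_of_le_of_ne (not_lt.mp h) (nz i)
      · intro h
        exact not_lt.mpr (le_of_lt h)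
    rw [h2]
    ring
  rcases hsum with h | h
  · left; rw [← hconv]; exact h
  · right; rw [← hconv]; exact h
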